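/- Suppose n ≥ 3, δ ≠ 0, and β_t ≠ 0 for some 4 ≤ t ≤ n. Then every even derivation of the Leibniz superalgebra H(β₄,…,β_n,δ,γ) is nilpotent. -/

import Mathlib

/-- If δ ≠ 0 and β_t ≠ 0 for some 4 ≤ t ≤ n, then every even derivation of
H(β₄,…,β_n,δ,γ) is nilpotent. -/
theorem statement11 {V : Type*} [AddCommGroup V] [Module ℂ V]
    (n : ℕ) (hn : 3 ≤ n) (β : ℕ → ℂ) (δ γ : ℂ)
    (bas : Module.Basis (Fin n ⊕ Fin n) ℂ V)
    (eN yN : ℕ → V)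
    (heN : ∀ k (h : 1 ≤ k ∧ k ≤ n), eN k = bas (Sum.inl ⟨k - 1, by omega⟩))
    (heN0 : ∀ k, ¬(1 ≤ k ∧ k ≤ n) → eN k = 0)
    (hyN : ∀ k (h : 1 ≤ k ∧ k ≤ n), yN k = bas (Sum.inr ⟨k - 1, by omega⟩))
    (hyN0 : ∀ k, ¬(1 ≤ k ∧ k ≤ n) → yN k = 0)
    (br : V →ₗ[ℂ] V →ₗ[ℂ] V)
    -- multiplication table (4):
    (hee1 : ∀ i, 1 ≤ i → i ≤ n →
      br (eN i) (eN 1) = if i = 1 then eN 3 else if i = 2 then 0 else eN (i + 1))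
    (hee2a : br (eN 1) (eN 2) = ∑ k ∈ Finset.Icc 4 n, β k • eN k)
    (hee2b : br (eN 2) (eN 2) = γ • eN n)
    (hee2c : ∀ i, 3 ≤ i → i ≤ n →
      br (eN i) (eN 2) = ∑ k ∈ Finset.Icc 4 n, β k • eN (i + k - 2))
    (hee0 : ∀ i j, 1 ≤ i → i ≤ n → 3 ≤ j → j ≤ n → br (eN i) (eN j) = 0)
    (hye1 : ∀ j, 1 ≤ j → j ≤ n → br (yN j) (eN 1) = yN (j + 1))
    (hye2a : br (yN 1) (eN 2) = (∑ k ∈ Finset.Icc 4 n, β k • yN (k - 1)) + δ • yN n)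
    (hye2b : ∀ j, 2 ≤ j → j ≤ n →
      br (yN j) (eN 2) = ∑ k ∈ Finset.Icc 4 n, β k • yN (j + k - 2))
    (hye0 : ∀ j i, 1 ≤ j → j ≤ n → 3 ≤ i → i ≤ n → br (yN j) (eN i) = 0)
    (hey1 : ∀ i, 1 ≤ i → i ≤ n → br (eN i) (yN 1) =
      if i = 1 then (1 / 2 : ℂ) • yN 2 else if i = 2 then 0 else (1 / 2 : ℂ) • yN i)
    (hey0 : ∀ i j, 1 ≤ i → i ≤ n → 2 ≤ j → j ≤ n → br (eN i) (yN j) = 0)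
    (hyy1 : ∀ j, 1 ≤ j → j ≤ n →
      br (yN j) (yN 1) = if j = 1 then eN 1 else eN (j + 1))
    (hyy0 : ∀ j k, 1 ≤ j → j ≤ n → 2 ≤ k → k ≤ n → br (yN j) (yN k) = 0)
    -- d is an even derivation:
    (d : Module.End ℂ V)
    (hdE : ∀ x ∈ Submodule.span ℂ (Set.range fun i : Fin n => bas (Sum.inl i)),
      d x ∈ Submodule.span ℂ (Set.range fun i : Fin n => bas (Sum.inl i)))
    (hdY : ∀ x ∈ Submodule.span ℂ (Set.range fun j : Fin n => bas (Sum.inr j)),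
      d x ∈ Submodule.span ℂ (Set.range fun j : Fin n => bas (Sum.inr j)))
    (hder : ∀ u v : V, d (br u v) = br (d u) v + br u (d v))
    (hδ : δ ≠ 0) (ht : ∃ t, 4 ≤ t ∧ t ≤ n ∧ β t ≠ 0) :
    ∃ N : ℕ, d ^ N = 0 := by
  -- coordinate functionals
  have hφE : ∀ m, 1 ≤ m → m ≤ n → ∃ φ : V →ₗ[ℂ] ℂ,
      (∀ k, φ (eN k) = if k = m then 1 else 0) ∧ (∀ k, φ (yN k) = 0) := by
    intro m hm1 hm2
    refine ⟨bas.coord (Sum.inl ⟨m - 1, by omega⟩), ?_, ?_⟩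
    · intro k
      by_cases hk : 1 ≤ k ∧ k ≤ n
      · rw [heN k hk]
        simp only [Module.Basis.coord_apply, Module.Basis.repr_self, Finsupp.single_apply,
          Sum.inl.injEq, Fin.mk.injEq]
        by_cases hkm : k = m
        · simp [hkm]
        · rw [if_neg (by omega), if_neg hkm]
      · rw [heN0 k hk, map_zero, if_neg (by omega)]
    · intro k
      by_cases hk : 1 ≤ k ∧ k ≤ n
      · rw [hyN k hk]
        simp [Module.Basis.coord_apply, Module.Basis.repr_self, Finsupp.single_apply]
      · rw [hyN0 k hk, map_zero]
  have hφY : ∀ m, 1 ≤ m → m ≤ n → ∃ φ : V →ₗ[ℂ] ℂ,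
      (∀ k, φ (yN k) = if k = m then 1 else 0) ∧ (∀ k, φ (eN k) = 0) := by
    intro m hm1 hm2
    refine ⟨bas.coord (Sum.inr ⟨m - 1, by omega⟩), ?_, ?_⟩
    · intro k
      by_cases hk : 1 ≤ k ∧ k ≤ n
      · rw [hyN k hk]
        simp only [Module.Basis.coord_apply, Module.Basis.repr_self, Finsupp.single_apply,
          Sum.inr.injEq, Fin.mk.injEq]
        by_cases hkm : k = m
        · simp [hkm]
        · rw [if_neg (by omega), if_neg hkm]
      · rw [hyN0 k hk, map_zero, if_neg (by omega)]
    · intro k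
      by_cases hk : 1 ≤ k ∧ k ≤ n
      · rw [heN k hk]
        simp [Module.Basis.coord_apply, Module.Basis.repr_self, Finsupp.single_apply]
      · rw [heN0 k hk, map_zero]
  -- representation lemmas
  have hrepE : ∀ x ∈ Submodule.span ℂ (Set.range fun i : Fin n => bas (Sum.inl i)),
      ∃ f : ℕ → ℂ, x = ∑ k ∈ Finset.Icc 1 n, f k • eN k := by
    intro x hx
    induction hx using Submodule.span_induction with
    | mem v hv =>
      obtain ⟨i, rfl⟩ := hv
      refine ⟨fun k => if k = i.1 + 1 then 1 else 0, ?_⟩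
      simp only [ite_smul, one_smul, zero_smul]
      rw [Finset.sum_ite_eq' (Finset.Icc 1 n) (i.1+1) eN,
        if_pos (by simp [Finset.mem_Icc]), heN (i.1+1) ⟨by omega, by omega⟩]; simp
    | zero => exact ⟨fun _ => 0, by simp⟩
    | add u w hu hw ihu ihw =>
      obtain ⟨f, hf⟩ := ihu; obtain ⟨g, hg⟩ := ihw
      exact ⟨f + g, by simp [hf, hg, add_smul, Finset.sum_add_distrib]⟩
    | smul r u hu ihu =>
      obtain ⟨f, hf⟩ := ihu
      exact ⟨r • f, by simp [hf, Finset.smul_sum, smul_smul]⟩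
  have hrepY : ∀ x ∈ Submodule.span ℂ (Set.range fun i : Fin n => bas (Sum.inr i)),
      ∃ f : ℕ → ℂ, x = ∑ k ∈ Finset.Icc 1 n, f k • yN k := by
    intro x hx
    induction hx using Submodule.span_induction with
    | mem v hv =>
      obtain ⟨i, rfl⟩ := hv
      refine ⟨fun k => if k = i.1 + 1 then 1 else 0, ?_⟩
      simp only [ite_smul, one_smul, zero_smul]
      rw [Finset.sum_ite_eq' (Finset.Icc 1 n) (i.1+1) yN,
        if_pos (by simp [Finset.mem_Icc]), hyN (i.1+1) ⟨by omega, by omega⟩]; simp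
    | zero => exact ⟨fun _ => 0, by simp⟩
    | add u w hu hw ihu ihw =>
      obtain ⟨f, hf⟩ := ihu; obtain ⟨g, hg⟩ := ihw
      exact ⟨f + g, by simp [hf, hg, add_smul, Finset.sum_add_distrib]⟩
    | smul r u hu ihu =>
      obtain ⟨f, hf⟩ := ihu
      exact ⟨r • f, by simp [hf, Finset.smul_sum, smul_smul]⟩
  -- memberships
  have hmemEspan : ∀ k, 1 ≤ k → k ≤ n →
      eN k ∈ Submodule.span ℂ (Set.range fun i : Fin n => bas (Sum.inl i)) := by
    intro k h1 h2
    rw [heN k ⟨h1, h2⟩]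
    exact Submodule.subset_span ⟨⟨k - 1, by omega⟩, rfl⟩
  have hmemYspan : ∀ k, 1 ≤ k → k ≤ n →
      yN k ∈ Submodule.span ℂ (Set.range fun i : Fin n => bas (Sum.inr i)) := by
    intro k h1 h2
    rw [hyN k ⟨h1, h2⟩]
    exact Submodule.subset_span ⟨⟨k - 1, by omega⟩, rfl⟩
  obtain ⟨a, ha⟩ := hrepE _ (hdE _ (hmemEspan 1 (by omega) (by omega)))
  obtain ⟨b, hb⟩ := hrepE _ (hdE _ (hmemEspan 2 (by omega) (by omega)))
  obtain ⟨c, hc⟩ := hrepY _ (hdY _ (hmemYspan 1 (by omega) (by omega)))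
  -- splitting sums
  have hsplit1 : ∀ (g : ℕ → V), ∑ k ∈ Finset.Icc 1 n, g k = g 1 + ∑ k ∈ Finset.Icc 2 n, g k := by
    intro g
    rw [show Finset.Icc 1 n = insert 1 (Finset.Icc 2 n) from by
      ext k; simp [Finset.mem_Icc, Finset.mem_insert]; omega,
      Finset.sum_insert (by simp)]
  have hsplit12 : ∀ (g : ℕ → V), ∑ k ∈ Finset.Icc 1 n, g k
      = g 1 + g 2 + ∑ k ∈ Finset.Icc 3 n, g k := by
    intro g
    rw [hsplit1, show Finset.Icc 2 n = insert 2 (Finset.Icc 3 n) from by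
      ext k; simp [Finset.mem_Icc, Finset.mem_insert]; omega,
      Finset.sum_insert (by simp), add_assoc]
  -- zero-convention product lemmas
  have hE1 : ∀ m, 3 ≤ m → br (eN m) (eN 1) = eN (m + 1) := by
    intro m h3
    by_cases hm : m ≤ n
    · rw [hee1 m (by omega) hm, if_neg (by omega), if_neg (by omega)]
    · rw [heN0 m (by omega), heN0 (m + 1) (by omega)]; simp
  have hY1 : ∀ m, 1 ≤ m → br (yN m) (eN 1) = yN (m + 1) := by
    intro m h1
    by_cases hm : m ≤ n
    · exact hye1 m h1 hm
    · rw [hyN0 m (by omega), hyN0 (m + 1) (by omega)]; simp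
  -- scalar sum helpers
  have hgone : ∀ (s : Finset ℕ) (g : ℕ → ℂ) (w : ℕ → ℕ) (m : ℕ), (∀ k ∈ s, w k ≠ m) →
      (∑ k ∈ s, g k * (if w k = m then (1:ℂ) else 0)) = 0 :=
    fun s g w m h => Finset.sum_eq_zero (fun k hk => by rw [if_neg (h k hk), mul_zero])
  have hpick : ∀ (s : Finset ℕ) (g : ℕ → ℂ) (w : ℕ → ℕ) (m k₀ : ℕ), k₀ ∈ s → w k₀ = m →
      (∀ k ∈ s, w k = m → k = k₀) →
      (∑ k ∈ s, g k * (if w k = m then (1:ℂ) else 0)) = g k₀ := by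
    intro s g w m k₀ hk₀ hw hu
    rw [Finset.sum_eq_single k₀
      (fun k hk hne => by rw [if_neg (fun hh => hne (hu k hk hh)), mul_zero])
      (fun h => absurd hk₀ h), if_pos hw, mul_one]
  have hyy11 : br (yN 1) (yN 1) = eN 1 := by rw [hyy1 1 (by omega) (by omega)]; simp
  have hF1 : (∑ k ∈ Finset.Icc 1 n, a k • eN k)
      = c 1 • eN 1 + (∑ k ∈ Finset.Icc 2 n, c k • eN (k + 1)) + c 1 • eN 1 := by
    calc ∑ k ∈ Finset.Icc 1 n, a k • eN k = d (br (yN 1) (yN 1)) := by rw [hyy11, ha]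
      _ = br (d (yN 1)) (yN 1) + br (yN 1) (d (yN 1)) := hder _ _
      _ = (∑ k ∈ Finset.Icc 1 n, c k • br (yN k) (yN 1))
          + ∑ k ∈ Finset.Icc 1 n, c k • br (yN 1) (yN k) := by
        rw [hc]
        simp only [map_sum, map_smul, LinearMap.sum_apply, LinearMap.smul_apply]
      _ = (c 1 • eN 1 + ∑ k ∈ Finset.Icc 2 n, c k • eN (k + 1)) + c 1 • eN 1 := by
        congr 1
        · rw [hsplit1 (fun k => c k • br (yN k) (yN 1)), hyy11]
          congr 1
          refine Finset.sum_congr rfl (fun k hk => ?_)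
          simp only [Finset.mem_Icc] at hk
          rw [hyy1 k (by omega) hk.2, if_neg (by omega)]
        · rw [hsplit1 (fun k => c k • br (yN 1) (yN k)), hyy11,
            Finset.sum_eq_zero (fun k hk => by
              simp only [Finset.mem_Icc] at hk
              rw [hyy0 1 k (by omega) (by omega) hk.1 hk.2, smul_zero]), add_zero]
      _ = c 1 • eN 1 + (∑ k ∈ Finset.Icc 2 n, c k • eN (k + 1)) + c 1 • eN 1 := by
        rw [add_assoc]
  have ha2 : a 2 = 0 := by
    obtain ⟨φ, φe, _⟩ := hφE 2 (by omega) (by omega)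
    have h := congrArg φ hF1
    simp only [map_add, map_sum, map_smul, smul_eq_mul, φe] at h
    rw [hpick (Finset.Icc 1 n) a (fun k => k) 2 2 (by simp [Finset.mem_Icc]; omega) rfl
      (fun k _ hk => hk)] at h
    rw [hgone (Finset.Icc 2 n) c (fun k => k + 1) 2
      (fun k hk => by simp only [Finset.mem_Icc] at hk; show k + 1 ≠ 2; omega)] at h
    norm_num at h
    exact h
  have ha1c : a 1 = 2 * c 1 := by
    obtain ⟨φ, φe, _⟩ := hφE 1 (by omega) (by omega)
    have h := congrArg φ hF1
    simp only [map_add, map_sum, map_smul, smul_eq_mul, φe] at h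
    rw [hpick (Finset.Icc 1 n) a (fun k => k) 1 1 (by simp [Finset.mem_Icc]; omega) rfl
      (fun k _ hk => hk)] at h
    rw [hgone (Finset.Icc 2 n) c (fun k => k + 1) 1
      (fun k hk => by simp only [Finset.mem_Icc] at hk; show k + 1 ≠ 1; omega)] at h
    norm_num at h
    linear_combination h
  have he11 : br (eN 1) (eN 1) = eN 3 := by rw [hee1 1 (by omega) (by omega)]; simp
  have he21 : br (eN 2) (eN 1) = 0 := by rw [hee1 2 (by omega) (by omega)]; simp
  have hF2 : (0:V) = b 1 • eN 3 + ∑ k ∈ Finset.Icc 3 n, b k • eN (k + 1) := by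
    calc (0:V) = d (br (eN 2) (eN 1)) := by rw [he21, map_zero]
      _ = br (d (eN 2)) (eN 1) + br (eN 2) (d (eN 1)) := hder _ _
      _ = (∑ k ∈ Finset.Icc 1 n, b k • br (eN k) (eN 1))
          + ∑ k ∈ Finset.Icc 1 n, a k • br (eN 2) (eN k) := by
        rw [ha, hb]; simp only [map_sum, map_smul, LinearMap.sum_apply, LinearMap.smul_apply]
      _ = (b 1 • eN 3 + b 2 • (0:V) + ∑ k ∈ Finset.Icc 3 n, b k • eN (k + 1))
          + (a 1 • (0:V) + a 2 • (γ • eN n) + ∑ k ∈ Finset.Icc 3 n, a k • (0:V)) := by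
        congr 1
        · rw [hsplit12 (fun k => b k • br (eN k) (eN 1)), he11, he21]
          congr 1
          refine Finset.sum_congr rfl (fun k hk => ?_)
          simp only [Finset.mem_Icc] at hk
          rw [hee1 k (by omega) hk.2, if_neg (by omega), if_neg (by omega)]
        · rw [hsplit12 (fun k => a k • br (eN 2) (eN k)), he21, hee2b]
          congr 1
          refine Finset.sum_congr rfl (fun k hk => ?_)
          simp only [Finset.mem_Icc] at hk
          rw [hee0 2 k (by omega) (by omega) hk.1 hk.2]
      _ = b 1 • eN 3 + ∑ k ∈ Finset.Icc 3 n, b k • eN (k + 1) := by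
        rw [ha2]; simp
  have hb1 : b 1 = 0 := by
    obtain ⟨φ, φe, _⟩ := hφE 3 (by omega) (by omega)
    have h := congrArg φ hF2
    simp only [map_add, map_sum, map_smul, map_zero, smul_eq_mul, φe] at h
    rw [hgone (Finset.Icc 3 n) b (fun k => k + 1) 3
      (fun k hk => by simp only [Finset.mem_Icc] at hk; show k + 1 ≠ 3; omega)] at h
    norm_num at h
    exact h.symm
  have hbmid : ∀ m, 3 ≤ m → m + 1 ≤ n → b m = 0 := by
    intro m hm3 hmn
    obtain ⟨φ, φe, _⟩ := hφE (m + 1) (by omega) (by omega)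
    have h := congrArg φ hF2
    simp only [map_add, map_sum, map_smul, map_zero, smul_eq_mul, φe] at h
    rw [hpick (Finset.Icc 3 n) b (fun k => k + 1) (m + 1) m
      (by simp [Finset.mem_Icc]; omega) rfl
      (fun k _ hk => by show k = m; exact Nat.add_right_cancel hk)] at h
    rw [if_neg (show ¬(3 = m + 1) by omega)] at h
    simp at h
    exact h.symm
  have hF3 : ∀ i, 3 ≤ i → i ≤ n → d (eN i)
      = (((i:ℂ) - 1) * a 1) • eN i + ∑ k ∈ Finset.Icc 3 n, a k • eN (k + i - 2) := by
    intro i hi3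
    induction i, hi3 using Nat.le_induction with
    | base =>
      intro _
      have hc1 : d (eN 3)
          = (∑ k ∈ Finset.Icc 1 n, a k • br (eN k) (eN 1))
            + ∑ k ∈ Finset.Icc 1 n, a k • br (eN 1) (eN k) := by
        rw [← he11, hder, ha]
        simp only [map_sum, map_smul, LinearMap.sum_apply, LinearMap.smul_apply]
      have hs1 : (∑ k ∈ Finset.Icc 3 n, a k • br (eN k) (eN 1))
          = ∑ k ∈ Finset.Icc 3 n, a k • eN (k + 3 - 2) := by
        refine Finset.sum_congr rfl (fun k hk => ?_)
        simp only [Finset.mem_Icc] at hk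
        rw [hee1 k (by omega) hk.2, if_neg (by omega), if_neg (by omega),
          show k + 1 = k + 3 - 2 by omega]
      have hs2 : (∑ k ∈ Finset.Icc 3 n, a k • br (eN 1) (eN k))
          = ∑ k ∈ Finset.Icc 3 n, a k • (0:V) := by
        refine Finset.sum_congr rfl (fun k hk => ?_)
        simp only [Finset.mem_Icc] at hk
        rw [hee0 1 k (by omega) (by omega) hk.1 hk.2]
      rw [hc1, hsplit12 (fun k => a k • br (eN k) (eN 1)),
        hsplit12 (fun k => a k • br (eN 1) (eN k)), he11, he21, hee2a, hs1, hs2, ha2]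
      simp only [zero_smul, smul_zero, Finset.sum_const_zero, add_zero, zero_add]
      match_scalars <;> (push_cast; ring)
    | succ i hi ih =>
      intro hin
      have hii := ih (by omega)
      have hei : br (eN i) (eN 1) = eN (i + 1) := hE1 i hi
      have hc1 : d (eN (i + 1))
          = br (d (eN i)) (eN 1) + ∑ k ∈ Finset.Icc 1 n, a k • br (eN i) (eN k) := by
        rw [← hei, hder, ha]
        simp only [map_sum, map_smul, LinearMap.sum_apply, LinearMap.smul_apply]
      have hs1 : (∑ k ∈ Finset.Icc 3 n, a k • br (eN (k + i - 2)) (eN 1))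
          = ∑ k ∈ Finset.Icc 3 n, a k • eN (k + (i + 1) - 2) := by
        refine Finset.sum_congr rfl (fun k hk => ?_)
        simp only [Finset.mem_Icc] at hk
        rw [hE1 (k + i - 2) (by omega), show k + i - 2 + 1 = k + (i + 1) - 2 by omega]
      have hs2 : (∑ k ∈ Finset.Icc 3 n, a k • br (eN i) (eN k))
          = ∑ k ∈ Finset.Icc 3 n, a k • (0:V) := by
        refine Finset.sum_congr rfl (fun k hk => ?_)
        simp only [Finset.mem_Icc] at hk
        rw [hee0 i k (by omega) (by omega) hk.1 hk.2]
      rw [hc1, hii]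
      simp only [map_add, map_smul, map_sum, LinearMap.add_apply, LinearMap.smul_apply,
        LinearMap.sum_apply]
      rw [hei, hs1, hsplit12 (fun k => a k • br (eN i) (eN k)), hei, ha2, hs2]
      simp only [zero_smul, smul_zero, Finset.sum_const_zero, add_zero, zero_add]
      match_scalars <;> (push_cast; ring)
  have hF4 : ∀ j, 1 ≤ j → j ≤ n → d (yN j)
      = (((j:ℂ) - 1) * a 1) • yN j + ∑ k ∈ Finset.Icc 1 n, c k • yN (k + j - 1) := by
    intro j hj1
    induction j, hj1 using Nat.le_induction with
    | base =>
      intro _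
      have hs0 : (∑ k ∈ Finset.Icc 1 n, c k • yN (k + 1 - 1))
          = ∑ k ∈ Finset.Icc 1 n, c k • yN k := by
        refine Finset.sum_congr rfl (fun k hk => ?_)
        rw [show k + 1 - 1 = k from by omega]
      rw [hc, hs0]
      match_scalars <;> (push_cast; ring)
    | succ j hj ih =>
      intro hjn
      have hjj := ih (by omega)
      have hyj : br (yN j) (eN 1) = yN (j + 1) := hY1 j hj
      have hc1 : d (yN (j + 1))
          = br (d (yN j)) (eN 1) + ∑ k ∈ Finset.Icc 1 n, a k • br (yN j) (eN k) := by
        rw [← hyj, hder, ha]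
        simp only [map_sum, map_smul, LinearMap.sum_apply, LinearMap.smul_apply]
      have hs1 : (∑ k ∈ Finset.Icc 1 n, c k • br (yN (k + j - 1)) (eN 1))
          = ∑ k ∈ Finset.Icc 1 n, c k • yN (k + (j + 1) - 1) := by
        refine Finset.sum_congr rfl (fun k hk => ?_)
        simp only [Finset.mem_Icc] at hk
        rw [hY1 (k + j - 1) (by omega), show k + j - 1 + 1 = k + (j + 1) - 1 by omega]
      have hs2 : (∑ k ∈ Finset.Icc 3 n, a k • br (yN j) (eN k))
          = ∑ k ∈ Finset.Icc 3 n, a k • (0:V) := by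
        refine Finset.sum_congr rfl (fun k hk => ?_)
        simp only [Finset.mem_Icc] at hk
        rw [hye0 j k (by omega) (by omega) hk.1 hk.2]
      rw [hc1, hjj]
      simp only [map_add, map_smul, map_sum, LinearMap.add_apply, LinearMap.smul_apply,
        LinearMap.sum_apply]
      rw [hyj, hs1, hsplit12 (fun k => a k • br (yN j) (eN k)), hyj, ha2, hs2]
      simp only [zero_smul, smul_zero, Finset.sum_const_zero, add_zero, zero_add]
      match_scalars <;> (push_cast; ring)
  -- F5 : from [e1,e2]
  have hF5 : ∀ m, 4 ≤ m → m ≤ n → β m * (((m:ℂ) - 2) * a 1 - b 2) = 0 := by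
    have hW1 : d (br (eN 1) (eN 2))
        = (∑ k ∈ Finset.Icc 4 n, (β k * (((k:ℂ) - 1) * a 1)) • eN k)
          + ∑ k ∈ Finset.Icc 4 n, β k • ∑ m ∈ Finset.Icc 3 n, a m • eN (m + k - 2) := by
      rw [hee2a, map_sum]
      simp only [map_smul]
      have h1 : ∀ k ∈ Finset.Icc 4 n, β k • d (eN k)
          = (β k * (((k:ℂ) - 1) * a 1)) • eN k
            + β k • ∑ m ∈ Finset.Icc 3 n, a m • eN (m + k - 2) := by
        intro k hk
        simp only [Finset.mem_Icc] at hk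
        rw [hF3 k (by omega) hk.2, smul_add, smul_smul]
      rw [Finset.sum_congr rfl h1, Finset.sum_add_distrib]
    have hW2 : d (br (eN 1) (eN 2))
        = a 1 • (∑ k ∈ Finset.Icc 4 n, β k • eN k)
          + ((∑ k ∈ Finset.Icc 3 n, a k • ∑ m ∈ Finset.Icc 4 n, β m • eN (k + m - 2))
            + b 2 • (∑ k ∈ Finset.Icc 4 n, β k • eN k)) := by
      rw [hder, ha, hb]
      simp only [map_sum, map_smul, LinearMap.sum_apply, LinearMap.smul_apply]
      rw [hsplit12 (fun k => a k • br (eN k) (eN 2)),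
        hsplit12 (fun k => b k • br (eN 1) (eN k)), hee2a, hee2b, he11, ha2, hb1]
      have h2 : (∑ k ∈ Finset.Icc 3 n, a k • br (eN k) (eN 2))
          = ∑ k ∈ Finset.Icc 3 n, a k • ∑ m ∈ Finset.Icc 4 n, β m • eN (k + m - 2) :=
        Finset.sum_congr rfl (fun k hk => by
          simp only [Finset.mem_Icc] at hk; rw [hee2c k hk.1 hk.2])
      have h3 : (∑ k ∈ Finset.Icc 3 n, b k • br (eN 1) (eN k))
          = ∑ k ∈ Finset.Icc 3 n, b k • (0:V) :=
        Finset.sum_congr rfl (fun k hk => by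
          simp only [Finset.mem_Icc] at hk; rw [hee0 1 k (by omega) (by omega) hk.1 hk.2])
      rw [h2, h3]
      simp only [zero_smul, smul_zero, Finset.sum_const_zero, add_zero, zero_add]
      abel
    have hD : (∑ k ∈ Finset.Icc 4 n, β k • ∑ m ∈ Finset.Icc 3 n, a m • eN (m + k - 2))
        = ∑ k ∈ Finset.Icc 3 n, a k • ∑ m ∈ Finset.Icc 4 n, β m • eN (k + m - 2) := by
      calc (∑ k ∈ Finset.Icc 4 n, β k • ∑ m ∈ Finset.Icc 3 n, a m • eN (m + k - 2))
          = ∑ k ∈ Finset.Icc 4 n, ∑ m ∈ Finset.Icc 3 n, β k • (a m • eN (m + k - 2)) :=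
            Finset.sum_congr rfl (fun k _ => Finset.smul_sum)
        _ = ∑ m ∈ Finset.Icc 3 n, ∑ k ∈ Finset.Icc 4 n, β k • (a m • eN (m + k - 2)) :=
            Finset.sum_comm
        _ = ∑ k ∈ Finset.Icc 3 n, a k • ∑ m ∈ Finset.Icc 4 n, β m • eN (k + m - 2) := by
            refine Finset.sum_congr rfl (fun k _ => ?_)
            rw [Finset.smul_sum]
            refine Finset.sum_congr rfl (fun m _ => ?_)
            rw [smul_smul, smul_smul, mul_comm (β m) (a k),
              show k + m - 2 = m + k - 2 from by omega]
    have hX : (∑ k ∈ Finset.Icc 4 n, (β k * (((k:ℂ) - 1) * a 1)) • eN k)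
        = a 1 • (∑ k ∈ Finset.Icc 4 n, β k • eN k)
          + b 2 • (∑ k ∈ Finset.Icc 4 n, β k • eN k) := by
      have heq := hW1.symm.trans hW2
      rw [hD] at heq
      calc (∑ k ∈ Finset.Icc 4 n, (β k * (((k:ℂ) - 1) * a 1)) • eN k)
          = ((∑ k ∈ Finset.Icc 4 n, (β k * (((k:ℂ) - 1) * a 1)) • eN k)
              + ∑ k ∈ Finset.Icc 3 n, a k • ∑ m ∈ Finset.Icc 4 n, β m • eN (k + m - 2))
            - ∑ k ∈ Finset.Icc 3 n, a k • ∑ m ∈ Finset.Icc 4 n, β m • eN (k + m - 2) := by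
            abel
        _ = (a 1 • (∑ k ∈ Finset.Icc 4 n, β k • eN k)
              + ((∑ k ∈ Finset.Icc 3 n, a k • ∑ m ∈ Finset.Icc 4 n, β m • eN (k + m - 2))
                + b 2 • (∑ k ∈ Finset.Icc 4 n, β k • eN k)))
            - ∑ k ∈ Finset.Icc 3 n, a k • ∑ m ∈ Finset.Icc 4 n, β m • eN (k + m - 2) := by
            rw [heq]
        _ = a 1 • (∑ k ∈ Finset.Icc 4 n, β k • eN k)
            + b 2 • (∑ k ∈ Finset.Icc 4 n, β k • eN k) := by abel
    intro m hm4 hmn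
    obtain ⟨φ, φe, _⟩ := hφE m (by omega) hmn
    have h := congrArg φ hX
    simp only [map_add, map_sum, map_smul, smul_eq_mul, φe] at h
    rw [hpick (Finset.Icc 4 n) (fun k => β k * (((k:ℂ) - 1) * a 1)) (fun k => k) m m
      (by simp [Finset.mem_Icc]; omega) rfl (fun k _ hk => hk)] at h
    rw [hpick (Finset.Icc 4 n) β (fun k => k) m m
      (by simp [Finset.mem_Icc]; omega) rfl (fun k _ hk => hk)] at h
    linear_combination h
  have hb2n : ((n:ℂ) - 1) * a 1 = b 2 := by
    have hW1 : d (br (yN 1) (eN 2))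
        = ((∑ k ∈ Finset.Icc 4 n, (β k * (((k:ℂ) - 2) * a 1)) • yN (k - 1))
          + ∑ k ∈ Finset.Icc 4 n, β k • ∑ m ∈ Finset.Icc 1 n, c m • yN (m + k - 2))
          + ((δ * (((n:ℂ) - 1) * a 1)) • yN n + (δ * c 1) • yN n) := by
      rw [hye2a, map_add, map_sum]
      simp only [map_smul]
      congr 1
      · have h1 : ∀ k ∈ Finset.Icc 4 n, β k • d (yN (k - 1))
            = (β k * (((k:ℂ) - 2) * a 1)) • yN (k - 1)
              + β k • ∑ m ∈ Finset.Icc 1 n, c m • yN (m + k - 2) := by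
          intro k hk
          simp only [Finset.mem_Icc] at hk
          have hidx : (∑ m ∈ Finset.Icc 1 n, c m • yN (m + (k - 1) - 1))
              = ∑ m ∈ Finset.Icc 1 n, c m • yN (m + k - 2) :=
            Finset.sum_congr rfl (fun m _ => by
              rw [show m + (k - 1) - 1 = m + k - 2 by omega])
          rw [hF4 (k - 1) (by omega) (by omega), hidx, smul_add, smul_smul,
            Nat.cast_sub (show 1 ≤ k by omega)]
          match_scalars <;> (push_cast; ring)
        rw [Finset.sum_congr rfl h1, Finset.sum_add_distrib]
      · have htail : (∑ m ∈ Finset.Icc 1 n, c m • yN (m + n - 1)) = c 1 • yN n := by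
          rw [Finset.sum_eq_single 1
            (fun m hm hne => by
              simp only [Finset.mem_Icc] at hm
              rw [hyN0 (m + n - 1) (by omega), smul_zero])
            (fun h => absurd (by simp [Finset.mem_Icc]; omega) h),
            show 1 + n - 1 = n by omega]
        rw [hF4 n (by omega) le_rfl, smul_add, htail, smul_smul, smul_smul]
    have hW2 : d (br (yN 1) (eN 2))
        = ((c 1 • (∑ k ∈ Finset.Icc 4 n, β k • yN (k - 1)) + (c 1 * δ) • yN n)
            + ∑ k ∈ Finset.Icc 2 n, c k • ∑ m ∈ Finset.Icc 4 n, β m • yN (k + m - 2))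
          + (b 2 • (∑ k ∈ Finset.Icc 4 n, β k • yN (k - 1)) + (b 2 * δ) • yN n) := by
      rw [hder, hc, hb]
      simp only [map_sum, map_smul, LinearMap.sum_apply, LinearMap.smul_apply]
      rw [hsplit1 (fun k => c k • br (yN k) (eN 2)),
        hsplit12 (fun k => b k • br (yN 1) (eN k)), hye2a, hb1]
      have h2 : (∑ k ∈ Finset.Icc 2 n, c k • br (yN k) (eN 2))
          = ∑ k ∈ Finset.Icc 2 n, c k • ∑ m ∈ Finset.Icc 4 n, β m • yN (k + m - 2) :=
        Finset.sum_congr rfl (fun k hk => by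
          simp only [Finset.mem_Icc] at hk; rw [hye2b k hk.1 hk.2])
      have h3 : (∑ k ∈ Finset.Icc 3 n, b k • br (yN 1) (eN k))
          = ∑ k ∈ Finset.Icc 3 n, b k • (0:V) :=
        Finset.sum_congr rfl (fun k hk => by
          simp only [Finset.mem_Icc] at hk; rw [hye0 1 k (by omega) (by omega) hk.1 hk.2])
      rw [h2, h3]
      simp only [zero_smul, smul_zero, Finset.sum_const_zero, add_zero, zero_add,
        smul_add, smul_smul]
    have hDY : (∑ k ∈ Finset.Icc 4 n, β k • ∑ m ∈ Finset.Icc 1 n, c m • yN (m + k - 2))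
        = c 1 • (∑ k ∈ Finset.Icc 4 n, β k • yN (k - 1))
          + ∑ k ∈ Finset.Icc 2 n, c k • ∑ m ∈ Finset.Icc 4 n, β m • yN (k + m - 2) := by
      calc (∑ k ∈ Finset.Icc 4 n, β k • ∑ m ∈ Finset.Icc 1 n, c m • yN (m + k - 2))
          = ∑ k ∈ Finset.Icc 4 n, ∑ m ∈ Finset.Icc 1 n, β k • (c m • yN (m + k - 2)) :=
            Finset.sum_congr rfl (fun k _ => Finset.smul_sum)
        _ = ∑ m ∈ Finset.Icc 1 n, ∑ k ∈ Finset.Icc 4 n, β k • (c m • yN (m + k - 2)) :=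
            Finset.sum_comm
        _ = (∑ k ∈ Finset.Icc 4 n, β k • (c 1 • yN (1 + k - 2)))
            + ∑ m ∈ Finset.Icc 2 n, ∑ k ∈ Finset.Icc 4 n, β k • (c m • yN (m + k - 2)) :=
            hsplit1 _
        _ = c 1 • (∑ k ∈ Finset.Icc 4 n, β k • yN (k - 1))
            + ∑ k ∈ Finset.Icc 2 n, c k • ∑ m ∈ Finset.Icc 4 n, β m • yN (k + m - 2) := by
            congr 1
            · rw [Finset.smul_sum]
              refine Finset.sum_congr rfl (fun k hk => ?_)
              simp only [Finset.mem_Icc] at hk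
              rw [smul_smul, smul_smul, mul_comm (β k) (c 1),
                show 1 + k - 2 = k - 1 from by omega]
            · refine Finset.sum_congr rfl (fun k hk => ?_)
              rw [Finset.smul_sum]
              refine Finset.sum_congr rfl (fun m _ => ?_)
              rw [smul_smul, smul_smul, mul_comm (β m) (c k),
                show k + m - 2 = m + k - 2 from by omega]
    have hX : (∑ k ∈ Finset.Icc 4 n, (β k * (((k:ℂ) - 2) * a 1)) • yN (k - 1))
          + (δ * (((n:ℂ) - 1) * a 1)) • yN n
        = b 2 • (∑ k ∈ Finset.Icc 4 n, β k • yN (k - 1)) + (b 2 * δ) • yN n := by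
      have heq := hW1.symm.trans hW2
      rw [hDY] at heq
      have hc1δ : (δ * c 1) • yN n = (c 1 * δ) • yN n := by rw [mul_comm]
      calc (∑ k ∈ Finset.Icc 4 n, (β k * (((k:ℂ) - 2) * a 1)) • yN (k - 1))
            + (δ * (((n:ℂ) - 1) * a 1)) • yN n
          = (((∑ k ∈ Finset.Icc 4 n, (β k * (((k:ℂ) - 2) * a 1)) • yN (k - 1))
              + (c 1 • (∑ k ∈ Finset.Icc 4 n, β k • yN (k - 1))
                + ∑ k ∈ Finset.Icc 2 n, c k • ∑ m ∈ Finset.Icc 4 n, β m • yN (k + m - 2)))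
              + ((δ * (((n:ℂ) - 1) * a 1)) • yN n + (δ * c 1) • yN n))
            - ((c 1 • (∑ k ∈ Finset.Icc 4 n, β k • yN (k - 1))
                + ∑ k ∈ Finset.Icc 2 n, c k • ∑ m ∈ Finset.Icc 4 n, β m • yN (k + m - 2))
              + (δ * c 1) • yN n) := by abel
        _ = (((c 1 • (∑ k ∈ Finset.Icc 4 n, β k • yN (k - 1)) + (c 1 * δ) • yN n)
              + ∑ k ∈ Finset.Icc 2 n, c k • ∑ m ∈ Finset.Icc 4 n, β m • yN (k + m - 2))
            + (b 2 • (∑ k ∈ Finset.Icc 4 n, β k • yN (k - 1)) + (b 2 * δ) • yN n))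
            - ((c 1 • (∑ k ∈ Finset.Icc 4 n, β k • yN (k - 1))
                + ∑ k ∈ Finset.Icc 2 n, c k • ∑ m ∈ Finset.Icc 4 n, β m • yN (k + m - 2))
              + (δ * c 1) • yN n) := by rw [heq]
        _ = b 2 • (∑ k ∈ Finset.Icc 4 n, β k • yN (k - 1)) + (b 2 * δ) • yN n := by
            rw [hc1δ]; abel
    obtain ⟨φ, φy, _⟩ := hφY n (by omega) le_rfl
    have h := congrArg φ hX
    simp only [map_add, map_sum, map_smul, smul_eq_mul, φy] at h
    rw [hgone (Finset.Icc 4 n) (fun k => β k * (((k:ℂ) - 2) * a 1)) (fun k => k - 1) n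
      (fun k hk => by simp only [Finset.mem_Icc] at hk; show k - 1 ≠ n; omega)] at h
    rw [hgone (Finset.Icc 4 n) β (fun k => k - 1) n
      (fun k hk => by simp only [Finset.mem_Icc] at hk; show k - 1 ≠ n; omega)] at h
    simp only [if_true, mul_one, zero_add] at h
    exact mul_left_cancel₀ hδ (by linear_combination h : δ * (((n:ℂ) - 1) * a 1) = δ * b 2)
  obtain ⟨t, ht4, htn, hβt⟩ := ht
  have h6 : ((t:ℂ) - 2) * a 1 - b 2 = 0 :=
    (mul_eq_zero.mp (hF5 t ht4 htn)).resolve_left hβt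
  have ha1 : a 1 = 0 := by
    have hcast : ((n:ℂ) - 1) - ((t:ℂ) - 2) ≠ 0 := by
      have he : ((n:ℂ) - 1) - ((t:ℂ) - 2) = ((n - t + 1 : ℕ) : ℂ) := by
        rw [Nat.cast_add, Nat.cast_sub htn, Nat.cast_one]; ring
      rw [he]
      exact_mod_cast (show (n - t + 1 : ℕ) ≠ 0 by omega)
    have hz : (((n:ℂ) - 1) - ((t:ℂ) - 2)) * a 1 = 0 := by linear_combination hb2n - h6
    exact (mul_eq_zero.mp hz).resolve_left hcast
  have hb2 : b 2 = 0 := by rw [← hb2n, ha1, mul_zero]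
  have hc1 : c 1 = 0 := by
    have h := ha1c; rw [ha1] at h; linear_combination (-(1:ℂ)/2) * h
  -- final forms of d on basis vectors
  have hde1 : d (eN 1) = ∑ k ∈ Finset.Icc 3 n, a k • eN k := by
    rw [ha]
    refine (Finset.sum_subset (fun x hx => ?_) (fun x hx hnx => ?_)).symm
    · simp only [Finset.mem_Icc] at hx ⊢; omega
    · simp only [Finset.mem_Icc] at hx hnx
      have : x = 1 ∨ x = 2 := by omega
      rcases this with rfl | rfl
      · rw [ha1, zero_smul]
      · rw [ha2, zero_smul]
  have hde2 : d (eN 2) = b n • eN n := by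
    rw [hb]
    rw [Finset.sum_eq_single n (fun k hk hne => ?_) (fun h => absurd (by
      simp only [Finset.mem_Icc]; omega) h)]
    simp only [Finset.mem_Icc] at hk
    have : b k = 0 := by
      rcases (show k = 1 ∨ k = 2 ∨ (3 ≤ k ∧ k + 1 ≤ n) from by omega) with rfl | rfl | ⟨h3, h4⟩
      · exact hb1
      · exact hb2
      · exact hbmid k h3 h4
    rw [this, zero_smul]
  have hdei : ∀ i, 3 ≤ i → i ≤ n →
      d (eN i) = ∑ k ∈ Finset.Icc 3 n, a k • eN (k + i - 2) := by
    intro i h3 hin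
    rw [hF3 i h3 hin, ha1, mul_zero, zero_smul, zero_add]
  have hdyj : ∀ j, 1 ≤ j → j ≤ n →
      d (yN j) = ∑ k ∈ Finset.Icc 2 n, c k • yN (k + j - 1) := by
    intro j h1 hjn
    rw [hF4 j h1 hjn, ha1, mul_zero, zero_smul, zero_add]
    refine (Finset.sum_subset (fun x hx => ?_) (fun x hx hnx => ?_)).symm
    · simp only [Finset.mem_Icc] at hx ⊢; omega
    · simp only [Finset.mem_Icc] at hx hnx
      have : x = 1 := by omega
      subst this
      rw [hc1, zero_smul]
  -- the filtration
  set F : ℕ → Submodule ℂ V := fun m =>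
    Submodule.span ℂ ((eN '' Set.Ici (m + 1)) ∪ (yN '' Set.Ici (m + 1))) with hF
  have hFmono : ∀ p q : ℕ, p ≤ q → F q ≤ F p := by
    intro p q hpq
    apply Submodule.span_mono
    apply Set.union_subset_union <;>
      exact Set.image_mono (Set.Ici_subset_Ici.mpr (by omega))
  have hmemE : ∀ p k, p + 1 ≤ k → eN k ∈ F p :=
    fun p k h => Submodule.subset_span (Or.inl ⟨k, h, rfl⟩)
  have hmemY : ∀ p k, p + 1 ≤ k → yN k ∈ F p :=
    fun p k h => Submodule.subset_span (Or.inr ⟨k, h, rfl⟩)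
  have hmemE' : ∀ p k, n < k → eN k ∈ F p := by
    intro p k h; rw [heN0 k (by omega)]; exact Submodule.zero_mem _
  have hdeF : ∀ k, 1 ≤ k → d (eN k) ∈ F k := by
    intro k hk1
    by_cases hkn : k ≤ n
    · rcases (show k = 1 ∨ k = 2 ∨ (3 ≤ k ∧ k ≤ n) from by omega) with rfl | rfl | ⟨h3, h4⟩
      · rw [hde1]
        refine Submodule.sum_mem _ (fun m hm => Submodule.smul_mem _ _ ?_)
        simp only [Finset.mem_Icc] at hm
        exact hmemE 1 m (by omega)
      · rw [hde2]
        exact Submodule.smul_mem _ _ (hmemE 2 n (by omega))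
      · rw [hdei k h3 h4]
        refine Submodule.sum_mem _ (fun m hm => Submodule.smul_mem _ _ ?_)
        simp only [Finset.mem_Icc] at hm
        exact hmemE k (m + k - 2) (by omega)
    · rw [heN0 k (by omega), map_zero]; exact Submodule.zero_mem _
  have hdyF : ∀ k, 1 ≤ k → d (yN k) ∈ F k := by
    intro k hk1
    by_cases hkn : k ≤ n
    · rw [hdyj k hk1 hkn]
      refine Submodule.sum_mem _ (fun m hm => Submodule.smul_mem _ _ ?_)
      simp only [Finset.mem_Icc] at hm
      exact hmemY k (m + k - 1) (by omega)
    · rw [hyN0 k (by omega), map_zero]; exact Submodule.zero_mem _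
  have hdF : ∀ m, ∀ x ∈ F m, d x ∈ F (m + 1) := by
    intro m x hx
    induction hx using Submodule.span_induction with
    | mem v hv =>
      rcases hv with ⟨k, hk, rfl⟩ | ⟨k, hk, rfl⟩
      · exact hFmono (m + 1) k hk (hdeF k (by simp only [Set.mem_Ici] at hk; omega))
      · exact hFmono (m + 1) k hk (hdyF k (by simp only [Set.mem_Ici] at hk; omega))
    | zero => rw [map_zero]; exact Submodule.zero_mem _
    | add u w hu hw ihu ihw => rw [map_add]; exact Submodule.add_mem _ ihu ihw
    | smul r u hu ihu => rw [map_smul]; exact Submodule.smul_mem _ _ ihu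
  have hpow : ∀ j m, ∀ x ∈ F m, (d ^ j) x ∈ F (m + j) := by
    intro j
    induction j with
    | zero => intro m x hx; simpa using hx
    | succ j ihj =>
      intro m x hx
      have h1 : (d ^ (j + 1)) x = (d ^ j) (d x) := by
        rw [pow_succ]; rfl
      rw [h1, show m + (j + 1) = (m + 1) + j by omega]
      exact ihj (m + 1) (d x) (hdF m x hx)
  have hF0 : ∀ x : V, x ∈ F 0 := by
    intro x
    have hb' : x ∈ Submodule.span ℂ (Set.range bas) := by
      rw [Module.Basis.span_eq]; exact Submodule.mem_top
    refine Submodule.span_le.mpr ?_ hb'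
    rintro v ⟨j, rfl⟩
    rcases j with i | i
    · have h1 : bas (Sum.inl i) = eN (i.1 + 1) := by
        rw [heN (i.1 + 1) ⟨by omega, by omega⟩]; simp
      rw [h1]; exact hmemE 0 _ (by omega)
    · have h1 : bas (Sum.inr i) = yN (i.1 + 1) := by
        rw [hyN (i.1 + 1) ⟨by omega, by omega⟩]; simp
      rw [h1]; exact hmemY 0 _ (by omega)
  have hFn : F n ≤ ⊥ := by
    apply Submodule.span_le.mpr
    rintro v (⟨k, hk, rfl⟩ | ⟨k, hk, rfl⟩) <;> simp only [Set.mem_Ici] at hk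
    · rw [heN0 k (by omega)]; exact Submodule.zero_mem _
    · rw [hyN0 k (by omega)]; exact Submodule.zero_mem _
  refine ⟨n, ?_⟩
  apply LinearMap.ext
  intro x
  have h1 : (d ^ n) x ∈ F n := by
    have := hpow n 0 x (hF0 x)
    simpa using this
  have h2 := hFn h1
  simpa using h2
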